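/- (Section 12: invariance of the leafwise holomorphic function under SU(1,1).) Let α, β, u, v, z ∈ ℂ satisfy |α|² − |β|² = 1, |v| < |u|, and |z| < 1. Set r = αu + βv̄, s = αv + βū, and w = (αz + β)/(β̄z + ᾱ). Then: (a) |r|² − |s|² = (|α|² − |β|²)(|u|² − |v|²) = |u|² − |v|², so in particular |s| < |r|; (b) β̄z + ᾱ ≠ 0 and |w| < 1; (c) u − v̄z ≠ 0, r − s̄w ≠ 0, and (r̄w − s)/(r − s̄w) = (ūz − v)/(u − v̄z). -/

import Mathlib

open ComplexConjugate

/-- **Section 12: invariance of the leafwise holomorphic function under SU(1,1).**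
For `|α|² - |β|² = 1`, `|v| < |u|`, `|z| < 1`, and `r = αu + βv̄`, `s = αv + βū`,
`w = (αz+β)/(β̄z+ᾱ)`: (a) `|r|² - |s|² = (|α|²-|β|²)(|u|²-|v|²) = |u|²-|v|²`, so `|s| < |r|`;
(b) `β̄z+ᾱ ≠ 0` and `|w| < 1`; (c) `u - v̄z ≠ 0`, `r - s̄w ≠ 0`, and
`(r̄w - s)/(r - s̄w) = (ūz - v)/(u - v̄z)`. -/
theorem su11_invariance
    (α β u v z r s w : ℂ)
    (hαβ : ‖α‖ ^ 2 - ‖β‖ ^ 2 = 1) (huv : ‖v‖ < ‖u‖) (hz : ‖z‖ < 1)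
    (hr : r = α * u + β * conj v) (hs : s = α * v + β * conj u)
    (hw : w = (α * z + β) / (conj β * z + conj α)) :
    (‖r‖ ^ 2 - ‖s‖ ^ 2 = (‖α‖ ^ 2 - ‖β‖ ^ 2) * (‖u‖ ^ 2 - ‖v‖ ^ 2) ∧
      ‖r‖ ^ 2 - ‖s‖ ^ 2 = ‖u‖ ^ 2 - ‖v‖ ^ 2 ∧ ‖s‖ < ‖r‖) ∧
    (conj β * z + conj α ≠ 0 ∧ ‖w‖ < 1) ∧
    (u - conj v * z ≠ 0 ∧ r - conj s * w ≠ 0 ∧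
      (conj r * w - s) / (r - conj s * w) = (conj u * z - v) / (u - conj v * z)) := by
  have hnormSq : ∀ x : ℂ, ‖x‖ ^ 2 = Complex.normSq x := by
    intro x; rw [Complex.sq_norm]
  -- (a)
  have hαβ' : Complex.normSq α - Complex.normSq β = 1 := by
    rw [← hnormSq, ← hnormSq]; exact hαβ
  have ha : ‖r‖ ^ 2 - ‖s‖ ^ 2 = (‖α‖ ^ 2 - ‖β‖ ^ 2) * (‖u‖ ^ 2 - ‖v‖ ^ 2) := by
    simp only [hnormSq, hr, hs, Complex.normSq_apply, Complex.add_re, Complex.add_im,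
      Complex.mul_re, Complex.mul_im, Complex.conj_re, Complex.conj_im]
    ring
  have ha2 : ‖r‖ ^ 2 - ‖s‖ ^ 2 = ‖u‖ ^ 2 - ‖v‖ ^ 2 := by rw [ha, hαβ]; ring
  have huv2 : (0:ℝ) < ‖u‖ ^ 2 - ‖v‖ ^ 2 := by
    have := huv
    nlinarith [norm_nonneg v, norm_nonneg u]
  have hsr : ‖s‖ < ‖r‖ := by
    have h := ha2
    nlinarith [norm_nonneg s, norm_nonneg r]
  -- (b)
  have hβα : ‖β‖ < ‖α‖ := by nlinarith [norm_nonneg β, norm_nonneg α]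
  have hβz : ‖conj β * z‖ < ‖conj α‖ := by
    rw [norm_mul, RCLike.norm_conj, RCLike.norm_conj]
    calc ‖β‖ * ‖z‖ ≤ ‖β‖ * 1 := by
          exact mul_le_mul_of_nonneg_left hz.le (norm_nonneg β)
      _ = ‖β‖ := mul_one _
      _ < ‖α‖ := hβα
  have hD : conj β * z + conj α ≠ 0 := by
    intro h
    have : conj α = -(conj β * z) := by linear_combination h
    rw [this, norm_neg] at hβz
    exact lt_irrefl _ hβz
  have hDsq : (0:ℝ) < Complex.normSq (conj β * z + conj α) := by
    rwa [Complex.normSq_pos]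
  have hnum : Complex.normSq (conj β * z + conj α) - Complex.normSq (α * z + β)
      = (Complex.normSq α - Complex.normSq β) * (1 - Complex.normSq z) := by
    simp only [Complex.normSq_apply, Complex.add_re, Complex.add_im,
      Complex.mul_re, Complex.mul_im, Complex.conj_re, Complex.conj_im]
    ring
  have hzsq : Complex.normSq z < 1 := by
    rw [← hnormSq z] at *
    nlinarith [norm_nonneg z]
  have hwlt : ‖w‖ < 1 := by
    rw [hw, norm_div]
    rw [div_lt_one (norm_pos_iff.mpr hD)]
    have h2 : ‖α * z + β‖ ^ 2 < ‖conj β * z + conj α‖ ^ 2 := by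
      rw [hnormSq, hnormSq]
      nlinarith [hnum, hαβ']
    nlinarith [norm_nonneg (α * z + β), norm_nonneg (conj β * z + conj α)]
  -- (c)
  have hu0 : (0:ℝ) < ‖u‖ := lt_of_le_of_lt (norm_nonneg v) huv
  have hden1 : u - conj v * z ≠ 0 := by
    intro h
    have h1 : u = conj v * z := by linear_combination h
    have : ‖u‖ < ‖u‖ := by
      calc ‖u‖ = ‖conj v * z‖ := by rw [h1]
        _ = ‖v‖ * ‖z‖ := by rw [norm_mul, RCLike.norm_conj]
        _ ≤ ‖v‖ * 1 := mul_le_mul_of_nonneg_left hz.le (norm_nonneg v)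
        _ = ‖v‖ := mul_one _
        _ < ‖u‖ := huv
    exact lt_irrefl _ this
  have hc : α * conj α - β * conj β = 1 := by
    rw [Complex.mul_conj, Complex.mul_conj]
    norm_cast
  have hwD : w * (conj β * z + conj α) = α * z + β := by
    rw [hw]; exact div_mul_cancel₀ _ hD
  have hcs : conj s = conj α * conj v + conj β * u := by
    simp [hs]
  have hcr : conj r = conj α * conj u + conj β * v := by
    simp [hr]
  have key1 : r - conj s * w = (u - conj v * z) / (conj β * z + conj α) := by
    rw [eq_div_iff hD, hr, hcs]
    linear_combination (-(conj α * conj v + conj β * u)) * hwD + (u - conj v * z) * hc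
  have key2 : conj r * w - s = (conj u * z - v) / (conj β * z + conj α) := by
    rw [eq_div_iff hD, hs, hcr]
    linear_combination (conj α * conj u + conj β * v) * hwD + (conj u * z - v) * hc
  have hden2 : r - conj s * w ≠ 0 := by
    rw [key1]
    exact div_ne_zero hden1 hD
  refine ⟨⟨ha, ha2, hsr⟩, ⟨hD, hwlt⟩, ⟨hden1, hden2, ?_⟩⟩
  rw [key1, key2]
  rw [div_div_div_cancel_right₀ hD]
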